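/- Let M be a compact smooth manifold and let E and F be smooth complex vector bundles of finite rank over M. If Γ^∞(E) and Γ^∞(F) are isomorphic as C^∞(M,ℂ)-modules, then there exists a smooth global section Φ of the homomorphism bundle Hom(E,F) such that for every x ∈ M the linear map Φ(x) : E_x → F_x is a ℂ-linear isomorphism; that is, E and F are isomorphic as smooth vector bundles. -/

import Mathlib

open Bundle Manifold
open scoped TensorProduct

local notation "∞" => (⊤ : ℕ∞)

noncomputable section

/-- Complex multiplication and addition are smooth over `ℝ`, so that the complex-valued smooth
functions on a real manifold form a (comm)ring. -/
instance : ContMDiffRing 𝓘(ℝ, ℂ) ∞ ℂ where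
  contMDiff_add := by
    rw [contMDiff_iff]
    refine ⟨continuous_add, fun x y => ?_⟩
    simp only [mfld_simps]
    exact contDiff_add.contDiffOn
  contMDiff_mul := by
    rw [contMDiff_iff]
    refine ⟨continuous_mul, fun x y => ?_⟩
    simp only [mfld_simps]
    exact contDiff_mul.contDiffOn

variable {EM : Type*} [NormedAddCommGroup EM] [NormedSpace ℝ EM] [FiniteDimensional ℝ EM]
  {HM : Type*} [TopologicalSpace HM] {IM : ModelWithCorners ℝ EM HM}
  {M : Type*} [TopologicalSpace M] [ChartedSpace HM M] [IsManifold IM ∞ M]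
  [T2Space M] [SecondCountableTopology M] [CompactSpace M]

/-- The constant functions make the smooth complex-valued functions a `ℂ`-algebra. -/
instance : Algebra ℂ C^∞⟮IM, M; 𝓘(ℝ, ℂ), ℂ⟯ :=
  RingHom.toAlgebra
    { toFun := fun c => ⟨fun _ => c, contMDiff_const⟩
      map_one' := rfl
      map_mul' := fun _ _ => rfl
      map_zero' := rfl
      map_add' := fun _ _ => rfl }

variable {F : Type*} [NormedAddCommGroup F] [NormedSpace ℂ F] [FiniteDimensional ℂ F]
  {V : M → Type*} [TopologicalSpace (TotalSpace F V)]
  [∀ x, AddCommGroup (V x)] [∀ x, Module ℂ (V x)] [∀ x, TopologicalSpace (V x)]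
  [FiberBundle F V] [VectorBundle ℂ F V] [VectorBundle ℝ F V] [ContMDiffVectorBundle ∞ F V IM]

/-- Pointwise scalar multiplication of a smooth section by a smooth function. -/
instance ContMDiffSection.instSMulSmoothMap :
    SMul C^∞⟮IM, M; 𝓘(ℝ, ℂ), ℂ⟯ Cₛ^∞⟮IM; F, V⟯ := by
  refine ⟨fun f s => ⟨fun x => f x • s x, ?_⟩⟩
  intro x₀
  have hs := s.contMDiff x₀
  have hf : ContMDiffAt IM 𝓘(ℝ, ℂ) ∞ f x₀ := f.contMDiff x₀
  rw [contMDiffAt_section] at hs ⊢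
  set e := trivializationAt F V x₀
  have h1 : ContMDiffAt IM 𝓘(ℝ, F →L[ℝ] F) ∞
      (fun x => (ContinuousLinearMap.lsmul ℝ ℂ (f x) : F →L[ℝ] F)) x₀ :=
    ContDiff.comp_contMDiffAt
      (g := ⇑(ContinuousLinearMap.lsmul ℝ ℂ : ℂ →L[ℝ] F →L[ℝ] F))
      (ContinuousLinearMap.contDiff _) hf
  refine (h1.clm_apply hs).congr_of_eventuallyEq ?_
  refine Filter.eventually_of_mem
    (e.open_baseSet.mem_nhds <| mem_baseSet_trivializationAt F V x₀) ?_
  intro x hx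
  simp only [ContinuousLinearMap.lsmul_apply]
  exact (e.linear ℂ hx).2 (f x) (s x)

set_option linter.unusedSectionVars false in
@[simp]
theorem ContMDiffSection.coe_smul_smoothMap (f : C^∞⟮IM, M; 𝓘(ℝ, ℂ), ℂ⟯)
    (s : Cₛ^∞⟮IM; F, V⟯) (x : M) : (f • s) x = f x • s x :=
  rfl

/-- The smooth sections of a smooth complex vector bundle form a module over the algebra of
smooth complex-valued functions on the base. -/
instance ContMDiffSection.instModuleSmoothMap :
    Module C^∞⟮IM, M; 𝓘(ℝ, ℂ), ℂ⟯ Cₛ^∞⟮IM; F, V⟯ where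
  one_smul s := ContMDiffSection.ext fun x => one_smul ℂ (s x)
  mul_smul f g s := ContMDiffSection.ext fun x => mul_smul (f x) (g x) (s x)
  smul_zero f := ContMDiffSection.ext fun x => smul_zero (f x)
  smul_add f s t := ContMDiffSection.ext fun x => smul_add (f x) (s x) (t x)
  add_smul f g s := ContMDiffSection.ext fun x => add_smul (f x) (g x) (s x)
  zero_smul s := ContMDiffSection.ext fun x => zero_smul ℂ (s x)

instance ContMDiffSection.instModuleComplex : Module ℂ Cₛ^∞⟮IM; F, V⟯ :=
  Module.compHom _ (algebraMap ℂ C^∞⟮IM, M; 𝓘(ℝ, ℂ), ℂ⟯)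

instance ContMDiffSection.instIsScalarTowerComplex :
    IsScalarTower ℂ C^∞⟮IM, M; 𝓘(ℝ, ℂ), ℂ⟯ Cₛ^∞⟮IM; F, V⟯ :=
  ⟨fun c f s => by
    show (c • f) • s = algebraMap ℂ C^∞⟮IM, M; 𝓘(ℝ, ℂ), ℂ⟯ c • f • s
    rw [Algebra.smul_def, mul_smul]⟩

variable {F₂ : Type*} [NormedAddCommGroup F₂] [NormedSpace ℂ F₂] [FiniteDimensional ℂ F₂]
  {W : M → Type*} [TopologicalSpace (TotalSpace F₂ W)]
  [∀ x, AddCommGroup (W x)] [∀ x, Module ℂ (W x)] [∀ x, TopologicalSpace (W x)]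
  [FiberBundle F₂ W] [VectorBundle ℂ F₂ W] [VectorBundle ℝ F₂ W] [ContMDiffVectorBundle ∞ F₂ W IM]
  [∀ x, IsTopologicalAddGroup (W x)] [∀ x, ContinuousSMul ℂ (W x)]
  [VectorBundle ℝ (F →L[ℂ] F₂) (fun x ↦ V x →SL[RingHom.id ℂ] W x)]
  [ContMDiffVectorBundle ∞ (F →L[ℂ] F₂) (fun x ↦ V x →SL[RingHom.id ℂ] W x) IM]

section Aux

variable {F₁ : Type*} [NormedAddCommGroup F₁] [NormedSpace ℂ F₁] [FiniteDimensional ℂ F₁]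
  {V₁ : M → Type*} [TopologicalSpace (TotalSpace F₁ V₁)]
  [∀ x, AddCommGroup (V₁ x)] [∀ x, Module ℂ (V₁ x)] [∀ x, TopologicalSpace (V₁ x)]
  [FiberBundle F₁ V₁] [VectorBundle ℂ F₁ V₁] [VectorBundle ℝ F₁ V₁] [ContMDiffVectorBundle ∞ F₁ V₁ IM]

set_option linter.unusedSectionVars false

/-- Smooth complex-valued bump functions: equal to `1` near `x₀`, topological support inside a
given open neighbourhood of `x₀`. -/
theorem exists_bump_complex (x₀ : M) {s : Set M} (hs : IsOpen s) (hx₀ : x₀ ∈ s) :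
    ∃ f : C^∞⟮IM, M; 𝓘(ℝ, ℂ), ℂ⟯, (∀ᶠ y in nhds x₀, f y = 1) ∧ tsupport ⇑f ⊆ s := by
  obtain ⟨u, u_open, hxu, hus⟩ :=
    normal_exists_closure_subset isClosed_singleton hs (Set.singleton_subset_iff.2 hx₀)
  obtain ⟨g, hg1, hg0, -⟩ := exists_contMDiffMap_one_nhds_of_subset_interior IM
    (isClosed_singleton (x := x₀)) (t := u) (by rwa [u_open.interior_eq])
  refine ⟨⟨fun y => (g y : ℂ), ?_⟩, ?_, ?_⟩
  · exact Complex.ofRealCLM.contDiff.comp_contMDiff g.contMDiff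
  · rw [nhdsSet_singleton] at hg1
    filter_upwards [hg1] with y hy
    show ((g y : ℝ) : ℂ) = 1
    rw [hy]; norm_num
  · have hsupp : Function.support (fun y => (g y : ℂ)) ⊆ u := by
      intro y hy
      by_contra h
      exact hy (by simp [hg0 y h])
    exact (closure_mono hsupp).trans hus

/-- A bump function times a constant local section (transported by a trivialization) is a
globally defined smooth section. -/
theorem extSection_contMDiff (x₀ : M) (f : C^∞⟮IM, M; 𝓘(ℝ, ℂ), ℂ⟯)
    (hf : tsupport ⇑f ⊆ (trivializationAt F₁ V₁ x₀).baseSet) (v : F₁) :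
    ContMDiff IM (IM.prod 𝓘(ℝ, F₁)) ∞ fun x =>
      TotalSpace.mk' F₁ x (f x • (trivializationAt F₁ V₁ x₀).symmL ℂ x v) := by
  intro y
  set e₀ := trivializationAt F₁ V₁ x₀ with he₀
  by_cases hy : y ∈ e₀.baseSet
  · refine (Trivialization.contMDiffAt_iff (e := e₀) (e₀.mem_source.2 hy)).2
      ⟨contMDiffAt_id, ?_⟩
    have h1 : ContMDiffAt IM 𝓘(ℝ, F₁) ∞
        (fun x => ((ContinuousLinearMap.toSpanSingleton ℂ v).restrictScalars ℝ) (f x)) y :=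
      ((ContinuousLinearMap.toSpanSingleton ℂ v).restrictScalars
        ℝ).contDiff.comp_contMDiffAt (f.contMDiff y)
    refine h1.congr_of_eventuallyEq ?_
    filter_upwards [e₀.open_baseSet.mem_nhds hy] with x hx
    have h2 : (e₀ ⟨x, f x • e₀.symmL ℂ x v⟩).2 = f x • (e₀ ⟨x, e₀.symmL ℂ x v⟩).2 :=
      (e₀.linear ℂ hx).2 _ _
    show (e₀ ⟨x, f x • e₀.symmL ℂ x v⟩).2 = _
    rw [h2, Trivialization.symmL_apply (hb := hx), e₀.apply_mk_symm hx v]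
    simp [ContinuousLinearMap.toSpanSingleton_apply]
  · have hy' : y ∉ tsupport ⇑f := fun h => hy (hf h)
    have h0 : ContMDiffAt IM (IM.prod 𝓘(ℝ, F₁)) ∞ (zeroSection F₁ V₁) y :=
      (contMDiff_zeroSection ℝ V₁) y
    refine h0.congr_of_eventuallyEq ?_
    filter_upwards [(isClosed_tsupport ⇑f).isOpen_compl.mem_nhds hy'] with x hx
    have hfx : f x = 0 := image_eq_zero_of_notMem_tsupport hx
    simp [hfx, Bundle.zeroSection]

/-- The global smooth section obtained by multiplying a bump function with a constant local
section. -/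
noncomputable def extSection (x₀ : M) (f : C^∞⟮IM, M; 𝓘(ℝ, ℂ), ℂ⟯)
    (hf : tsupport ⇑f ⊆ (trivializationAt F₁ V₁ x₀).baseSet) (v : F₁) : Cₛ^∞⟮IM; F₁, V₁⟯ :=
  ⟨fun x => f x • (trivializationAt F₁ V₁ x₀).symmL ℂ x v, extSection_contMDiff x₀ f hf v⟩

@[simp]
theorem extSection_apply (x₀ : M) (f : C^∞⟮IM, M; 𝓘(ℝ, ℂ), ℂ⟯)
    (hf : tsupport ⇑f ⊆ (trivializationAt F₁ V₁ x₀).baseSet) (v : F₁) (x : M) :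
    extSection x₀ f hf v x = f x • (trivializationAt F₁ V₁ x₀).symmL ℂ x v :=
  rfl

theorem extSection_self (x : M) (f : C^∞⟮IM, M; 𝓘(ℝ, ℂ), ℂ⟯)
    (hf : tsupport ⇑f ⊆ (trivializationAt F₁ V₁ x).baseSet) (hfx : f x = 1) (v : V₁ x) :
    extSection x f hf ((trivializationAt F₁ V₁ x).linearMapAt ℂ x v) x = v := by
  have hx : x ∈ (trivializationAt F₁ V₁ x).baseSet := mem_baseSet_trivializationAt F₁ V₁ x
  rw [extSection_apply, hfx, one_smul, Trivialization.symmL_apply (hb := hx)]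
  calc (trivializationAt F₁ V₁ x).symm x ((trivializationAt F₁ V₁ x).linearMapAt ℂ x v)
      = (trivializationAt F₁ V₁ x).symmₗ ℂ x ((trivializationAt F₁ V₁ x).linearMapAt ℂ x v) := by
        rw [(trivializationAt F₁ V₁ x).coe_symmₗ (hb := hx)]
    _ = v := (trivializationAt F₁ V₁ x).symmₗ_linearMapAt hx v

/-- A smooth section, read in a trivialization (whose base set contains the point), is smooth. -/
theorem contMDiffAt_trivialized (s : Cₛ^∞⟮IM; F₁, V₁⟯) (x₀ : M) {y : M}
    (hy : y ∈ (trivializationAt F₁ V₁ x₀).baseSet) :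
    ContMDiffAt IM 𝓘(ℝ, F₁) ∞ (fun x => ((trivializationAt F₁ V₁ x₀) ⟨x, s x⟩).2) y := by
  have h := s.contMDiff y
  rw [Trivialization.contMDiffAt_iff (e := trivializationAt F₁ V₁ x₀)
    ((trivializationAt F₁ V₁ x₀).mem_source.2 hy)] at h
  exact h.2

/-- A bump function times a linear functional applied to a trivialized smooth section is a smooth
complex-valued function. -/
theorem coordFun_contMDiff (x₀ : M) (f : C^∞⟮IM, M; 𝓘(ℝ, ℂ), ℂ⟯)
    (hf : tsupport ⇑f ⊆ (trivializationAt F₁ V₁ x₀).baseSet) (s : Cₛ^∞⟮IM; F₁, V₁⟯)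
    (L : F₁ →ₗ[ℂ] ℂ) :
    ContMDiff IM 𝓘(ℝ, ℂ) ∞ fun x =>
      f x * L ((trivializationAt F₁ V₁ x₀).linearMapAt ℂ x (s x)) := by
  intro y
  set e₀ := trivializationAt F₁ V₁ x₀ with he₀
  by_cases hy : y ∈ e₀.baseSet
  · have h1 : ContMDiffAt IM 𝓘(ℝ, ℂ) ∞ (fun x => L (e₀.linearMapAt ℂ x (s x))) y := by
      have h2 : ContMDiffAt IM 𝓘(ℝ, ℂ) ∞
          (fun x => ((LinearMap.toContinuousLinearMap L).restrictScalars ℝ)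
            ((e₀ ⟨x, s x⟩).2)) y :=
        (((LinearMap.toContinuousLinearMap L).restrictScalars ℝ).contDiff).comp_contMDiffAt
          (contMDiffAt_trivialized s x₀ hy)
      refine h2.congr_of_eventuallyEq ?_
      filter_upwards [e₀.open_baseSet.mem_nhds hy] with x hx
      rw [Trivialization.linearMapAt_apply, if_pos hx]
      simp
    exact (f.contMDiff y).mul h1
  · have hy' : y ∉ tsupport ⇑f := fun h => hy (hf h)
    refine (contMDiffAt_const (c := (0 : ℂ))).congr_of_eventuallyEq ?_
    filter_upwards [(isClosed_tsupport ⇑f).isOpen_compl.mem_nhds hy'] with x hx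
    rw [image_eq_zero_of_notMem_tsupport hx, zero_mul]

/-- Evaluation of smooth sections at a point, as an additive monoid homomorphism. -/
def evalAddHom (x : M) : Cₛ^∞⟮IM; F₁, V₁⟯ →+ V₁ x where
  toFun s := s x
  map_zero' := rfl
  map_add' _ _ := rfl

@[simp]
theorem evalAddHom_apply (x : M) (s : Cₛ^∞⟮IM; F₁, V₁⟯) : evalAddHom x s = s x := rfl

variable {F₃ : Type*} [NormedAddCommGroup F₃] [NormedSpace ℂ F₃] [FiniteDimensional ℂ F₃]
  {V₃ : M → Type*} [TopologicalSpace (TotalSpace F₃ V₃)]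
  [∀ x, AddCommGroup (V₃ x)] [∀ x, Module ℂ (V₃ x)] [∀ x, TopologicalSpace (V₃ x)]
  [FiberBundle F₃ V₃] [VectorBundle ℂ F₃ V₃] [VectorBundle ℝ F₃ V₃] [ContMDiffVectorBundle ∞ F₃ V₃ IM]

/-- Key locality property: a `C^∞(M,ℂ)`-linear map between section modules is a local operator:
if a section vanishes at a point, so does its image. -/
theorem apply_eq_zero_of_eq_zero
    (T : Cₛ^∞⟮IM; F₁, V₁⟯ →ₗ[C^∞⟮IM, M; 𝓘(ℝ, ℂ), ℂ⟯] Cₛ^∞⟮IM; F₃, V₃⟯)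
    (x : M) (s : Cₛ^∞⟮IM; F₁, V₁⟯) (hs : s x = 0) : T s x = 0 := by
  classical
  set e₀ := trivializationAt F₁ V₁ x with he₀
  obtain ⟨f, hf1, hfs⟩ :=
    exists_bump_complex (IM := IM) x e₀.open_baseSet (mem_baseSet_trivializationAt F₁ V₁ x)
  have hfx : f x = 1 := hf1.self_of_nhds
  set b := Module.finBasis ℂ F₁ with hb
  set g : Fin (Module.finrank ℂ F₁) → C^∞⟮IM, M; 𝓘(ℝ, ℂ), ℂ⟯ := fun i =>
    ⟨fun y => f y * b.coord i (e₀.linearMapAt ℂ y (s y)),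
      coordFun_contMDiff x f hfs s (b.coord i)⟩ with hg
  set t : Fin (Module.finrank ℂ F₁) → Cₛ^∞⟮IM; F₁, V₁⟯ := fun i =>
    extSection x f hfs (b i) with ht
  have hgy : ∀ i y, g i y = f y * b.coord i (e₀.linearMapAt ℂ y (s y)) := fun i y => rfl
  have key : (f * f) • s = ∑ i, g i • t i := by
    apply ContMDiffSection.ext
    intro y
    have hsum : (∑ i, g i • t i) y = ∑ i, (g i • t i) y :=
      map_sum (evalAddHom y) _ Finset.univ
    rw [ContMDiffSection.coe_smul_smoothMap, hsum]
    have hterm : ∀ i, (g i • t i) y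
        = (f y * b.coord i (e₀.linearMapAt ℂ y (s y))) • (f y • e₀.symmL ℂ y (b i)) := fun i => by
      rw [ContMDiffSection.coe_smul_smoothMap, hgy]; rfl
    by_cases hy : y ∈ e₀.baseSet
    · have step1 : ∀ i, (g i • t i) y
          = (f y * f y) • (b.repr (e₀.linearMapAt ℂ y (s y)) i • e₀.symmL ℂ y (b i)) := fun i => by
        rw [hterm i, smul_smul, smul_smul, mul_right_comm, Module.Basis.coord_apply]
      calc (f * f) y • s y = (f y * f y) • s y := rfl
        _ = (f y * f y) • (e₀.symmL ℂ y (∑ i, b.repr (e₀.linearMapAt ℂ y (s y)) i • b i)) := by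
            rw [b.sum_repr]
            congr 1
            rw [Trivialization.symmL_apply (hb := hy)]
            symm
            calc e₀.symm y (e₀.linearMapAt ℂ y (s y))
                = e₀.symmₗ ℂ y (e₀.linearMapAt ℂ y (s y)) := by rw [e₀.coe_symmₗ (hb := hy)]
              _ = s y := e₀.symmₗ_linearMapAt hy (s y)
        _ = ∑ i, (f y * f y) • (b.repr (e₀.linearMapAt ℂ y (s y)) i • e₀.symmL ℂ y (b i)) := by
            rw [map_sum, Finset.smul_sum]
            simp_rw [map_smul]
        _ = ∑ i, (g i • t i) y := by
            exact (Finset.sum_congr rfl fun i _ => (step1 i).symm)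
    · have hfy : f y = 0 := image_eq_zero_of_notMem_tsupport (fun h => hy (hfs h))
      have : ∀ i, (g i • t i) y = 0 := fun i => by rw [hterm i, hfy]; simp
      simp only [this, Finset.sum_const_zero]
      show (f y * f y) • s y = 0
      rw [hfy]; simp
  have hone : (f * f) + (1 - f * f) = (1 : C^∞⟮IM, M; 𝓘(ℝ, ℂ), ℂ⟯) := by ring
  have hdecomp : s = (f * f) • s + (1 - f * f) • s := by
    rw [← add_smul, hone, one_smul]
  have h2 : T s x = T ((f * f) • s) x + T ((1 - f * f) • s) x := by
    conv_lhs => rw [hdecomp]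
    rw [map_add]
    rfl
  have hA : T ((f * f) • s) x = 0 := by
    rw [key, map_sum]
    have : (∑ i, T (g i • t i)) x = ∑ i, T (g i • t i) x := map_sum (evalAddHom x) _ Finset.univ
    rw [this]
    refine Finset.sum_eq_zero fun i _ => ?_
    rw [map_smul, ContMDiffSection.coe_smul_smoothMap, hgy, hs]
    simp
  have hB : T ((1 - f * f) • s) x = 0 := by
    rw [map_smul, ContMDiffSection.coe_smul_smoothMap]
    have : (1 - f * f) x = 1 - f x * f x := rfl
    rw [this, hfx]
    simp
  rw [h2, hA, hB, add_zero]

/-- The fiberwise linear map induced at `x` by a `C^∞(M,ℂ)`-linear map of section modules. -/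
noncomputable def fiberMap
    (T : Cₛ^∞⟮IM; F₁, V₁⟯ →ₗ[C^∞⟮IM, M; 𝓘(ℝ, ℂ), ℂ⟯] Cₛ^∞⟮IM; F₃, V₃⟯)
    (x : M) (f : C^∞⟮IM, M; 𝓘(ℝ, ℂ), ℂ⟯)
    (hf : tsupport ⇑f ⊆ (trivializationAt F₁ V₁ x).baseSet) (hfx : f x = 1) :
    V₁ x →ₗ[ℂ] V₃ x where
  toFun v := T (extSection x f hf ((trivializationAt F₁ V₁ x).linearMapAt ℂ x v)) x
  map_add' v w := by
    have h1 : extSection x f hf ((trivializationAt F₁ V₁ x).linearMapAt ℂ x (v + w))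
        = extSection x f hf ((trivializationAt F₁ V₁ x).linearMapAt ℂ x v)
          + extSection x f hf ((trivializationAt F₁ V₁ x).linearMapAt ℂ x w) := by
      apply ContMDiffSection.ext
      intro y
      rw [ContMDiffSection.coe_add]
      show f y • (trivializationAt F₁ V₁ x).symmL ℂ y
          ((trivializationAt F₁ V₁ x).linearMapAt ℂ x (v + w)) = _
      rw [map_add ((trivializationAt F₁ V₁ x).linearMapAt ℂ x), map_add, smul_add]
      rfl
    rw [h1, map_add, ContMDiffSection.coe_add]
    rfl
  map_smul' c v := by
    have h1 : extSection x f hf ((trivializationAt F₁ V₁ x).linearMapAt ℂ x (c • v))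
        = (algebraMap ℂ C^∞⟮IM, M; 𝓘(ℝ, ℂ), ℂ⟯ c)
          • extSection x f hf ((trivializationAt F₁ V₁ x).linearMapAt ℂ x v) := by
      apply ContMDiffSection.ext
      intro y
      rw [ContMDiffSection.coe_smul_smoothMap]
      show f y • (trivializationAt F₁ V₁ x).symmL ℂ y
          ((trivializationAt F₁ V₁ x).linearMapAt ℂ x (c • v)) = _
      rw [map_smul ((trivializationAt F₁ V₁ x).linearMapAt ℂ x), map_smul, smul_comm]
      rfl
    rw [h1, map_smul, ContMDiffSection.coe_smul_smoothMap]
    rfl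

theorem fiberMap_apply_section
    (T : Cₛ^∞⟮IM; F₁, V₁⟯ →ₗ[C^∞⟮IM, M; 𝓘(ℝ, ℂ), ℂ⟯] Cₛ^∞⟮IM; F₃, V₃⟯)
    (x : M) (f : C^∞⟮IM, M; 𝓘(ℝ, ℂ), ℂ⟯)
    (hf : tsupport ⇑f ⊆ (trivializationAt F₁ V₁ x).baseSet) (hfx : f x = 1)
    (s : Cₛ^∞⟮IM; F₁, V₁⟯) :
    fiberMap T x f hf hfx (s x) = T s x := by
  set u := extSection x f hf ((trivializationAt F₁ V₁ x).linearMapAt ℂ x (s x)) with hu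
  have hux : u x = s x := extSection_self x f hf hfx (s x)
  have h0 : T (u - s) x = 0 := by
    refine apply_eq_zero_of_eq_zero T x (u - s) ?_
    have : (u - s) x = u x - s x := by rw [ContMDiffSection.coe_sub]; rfl
    rw [this, hux, sub_self]
  have h2 : (T u - T s) x = 0 := by rw [← map_sub]; exact h0
  have h3 : T u x - T s x = 0 := by rw [← h2, ContMDiffSection.coe_sub]; rfl
  exact sub_eq_zero.mp h3

theorem fiberMap_left_inv
    (T : Cₛ^∞⟮IM; F₁, V₁⟯ ≃ₗ[C^∞⟮IM, M; 𝓘(ℝ, ℂ), ℂ⟯] Cₛ^∞⟮IM; F₃, V₃⟯)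
    (x : M) (f g : C^∞⟮IM, M; 𝓘(ℝ, ℂ), ℂ⟯)
    (hf : tsupport ⇑f ⊆ (trivializationAt F₁ V₁ x).baseSet)
    (hg : tsupport ⇑g ⊆ (trivializationAt F₃ V₃ x).baseSet)
    (hfx : f x = 1) (hgx : g x = 1) (v : V₁ x) :
    fiberMap T.symm.toLinearMap x g hg hgx (fiberMap T.toLinearMap x f hf hfx v) = v := by
  set u := extSection x f hf ((trivializationAt F₁ V₁ x).linearMapAt ℂ x v) with hu
  have hux : u x = v := extSection_self x f hf hfx v
  have h1 : fiberMap T.toLinearMap x f hf hfx v = T.toLinearMap u x := by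
    rw [← hux]
    exact fiberMap_apply_section T.toLinearMap x f hf hfx u
  rw [h1, fiberMap_apply_section T.symm.toLinearMap x g hg hgx (T.toLinearMap u)]
  show T.symm (T u) x = v
  rw [T.symm_apply_apply, hux]

end Aux

/-- If the modules of smooth sections of two smooth complex vector bundles over a compact manifold
are isomorphic over the smooth functions, then the bundles are isomorphic: there is a smooth global
section of `Hom(E,F)` which is a fiberwise linear isomorphism. -/
theorem bundle_iso_of_sections_iso
    (e : Cₛ^∞⟮IM; F, V⟯ ≃ₗ[C^∞⟮IM, M; 𝓘(ℝ, ℂ), ℂ⟯] Cₛ^∞⟮IM; F₂, W⟯) :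
    ∃ Φ : Cₛ^∞⟮IM; F →L[ℂ] F₂, fun x ↦ V x →SL[RingHom.id ℂ] W x⟯,
      ∀ x : M, Function.Bijective (Φ x) := by
  classical
  have hopen : ∀ x : M,
      IsOpen ((trivializationAt F V x).baseSet ∩ (trivializationAt F₂ W x).baseSet) := fun x =>
    (trivializationAt F V x).open_baseSet.inter (trivializationAt F₂ W x).open_baseSet
  have hmem : ∀ x : M,
      x ∈ (trivializationAt F V x).baseSet ∩ (trivializationAt F₂ W x).baseSet := fun x =>
    ⟨mem_baseSet_trivializationAt F V x, mem_baseSet_trivializationAt F₂ W x⟩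
  choose f hf1 hfs using fun x : M => exists_bump_complex (IM := IM) x (hopen x) (hmem x)
  have hfsV : ∀ x, tsupport ⇑(f x) ⊆ (trivializationAt F V x).baseSet := fun x =>
    (hfs x).trans Set.inter_subset_left
  have hfsW : ∀ x, tsupport ⇑(f x) ⊆ (trivializationAt F₂ W x).baseSet := fun x =>
    (hfs x).trans Set.inter_subset_right
  have hfx : ∀ x, f x x = 1 := fun x => (hf1 x).self_of_nhds
  -- trivializations as continuous linear equivalences on the fibers
  set cV : ∀ x : M, V x ≃L[ℂ] F := fun x =>
    (trivializationAt F V x).continuousLinearEquivAt ℂ x (mem_baseSet_trivializationAt F V x)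
    with hcV
  set cW : ∀ x : M, W x ≃L[ℂ] F₂ := fun x =>
    (trivializationAt F₂ W x).continuousLinearEquivAt ℂ x (mem_baseSet_trivializationAt F₂ W x)
    with hcW
  -- the fiberwise maps, as continuous linear maps
  set Φ : ∀ x : M, V x →L[ℂ] W x := fun x =>
    ((cW x).symm : F₂ →L[ℂ] W x).comp
      ((LinearMap.toContinuousLinearMap
        (((cW x).toLinearEquiv.toLinearMap.comp
            (fiberMap e.toLinearMap x (f x) (hfsV x) (hfx x))).comp
          (cV x).symm.toLinearEquiv.toLinearMap)).comp ((cV x) : V x →L[ℂ] F)) with hΦ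
  have hΦapp : ∀ x v, Φ x v = fiberMap e.toLinearMap x (f x) (hfsV x) (hfx x) v := by
    intro x v
    rw [hΦ]
    simp
  -- smoothness of the family `Φ` as a section of the hom-bundle
  have hsmooth : ContMDiff IM (IM.prod 𝓘(ℝ, F →L[ℂ] F₂)) ∞
      (fun x => TotalSpace.mk' (F →L[ℂ] F₂) x (Φ x)) := by
    intro x₀
    rw [Bundle.contMDiffAt_section]
    have heq : (fun x => (trivializationAt (F →L[ℂ] F₂)
          (fun x ↦ V x →SL[RingHom.id ℂ] W x) x₀ ⟨x, Φ x⟩).2)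
        = fun x => ContinuousLinearMap.inCoordinates F V F₂ W x₀ x x₀ x (Φ x) := rfl
    rw [heq]
    set b := Module.finBasis ℂ F with hbdef
    set Ξ : (F →L[ℂ] F₂) ≃ₗ[ℂ] (Fin (Module.finrank ℂ F) → F₂) :=
      ((LinearMap.toContinuousLinearMap :
          (F →ₗ[ℂ] F₂) ≃ₗ[ℂ] (F →L[ℂ] F₂)).symm.trans (b.constr ℂ).symm) with hΞdef
    set Ξc : (F →L[ℂ] F₂) ≃L[ℂ] (Fin (Module.finrank ℂ F) → F₂) :=
      Ξ.toContinuousLinearEquiv with hΞc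
    have hΞapp : ∀ (L : F →L[ℂ] F₂) i, Ξc L i = L (b i) := fun L i => rfl
    have hG : ContMDiffAt IM 𝓘(ℝ, Fin (Module.finrank ℂ F) → F₂) ∞
        (fun x => Ξc (ContinuousLinearMap.inCoordinates F V F₂ W x₀ x x₀ x (Φ x))) x₀ := by
      rw [contMDiffAt_pi_space]
      intro i
      have hsm : ContMDiffAt IM 𝓘(ℝ, F₂) ∞
          (fun x => ((trivializationAt F₂ W x₀)
            ⟨x, (e (extSection x₀ (f x₀) (hfsV x₀) (b i))) x⟩).2) x₀ :=
        contMDiffAt_trivialized (e (extSection x₀ (f x₀) (hfsV x₀) (b i))) x₀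
          (mem_baseSet_trivializationAt F₂ W x₀)
      refine hsm.congr_of_eventuallyEq ?_
      filter_upwards [hf1 x₀,
        (trivializationAt F V x₀).open_baseSet.mem_nhds (mem_baseSet_trivializationAt F V x₀),
        (trivializationAt F₂ W x₀).open_baseSet.mem_nhds (mem_baseSet_trivializationAt F₂ W x₀)]
        with x hx1 hxV hxW
      rw [hΞapp]
      have h2 : ContinuousLinearMap.inCoordinates F V F₂ W x₀ x x₀ x (Φ x) (b i)
          = (trivializationAt F₂ W x₀).continuousLinearMapAt ℂ x
            (Φ x ((trivializationAt F V x₀).symmL ℂ x (b i))) := rfl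
      rw [h2, hΦapp]
      have h3 : (trivializationAt F V x₀).symmL ℂ x (b i)
          = (extSection x₀ (f x₀) (hfsV x₀) (b i)) x := by
        rw [extSection_apply, hx1, one_smul]
      rw [h3, fiberMap_apply_section e.toLinearMap x (f x) (hfsV x) (hfx x)]
      rw [Trivialization.continuousLinearMapAt_apply, Trivialization.linearMapAt_apply,
        if_pos hxW]
      rfl
    have hrw : (fun x => ContinuousLinearMap.inCoordinates F V F₂ W x₀ x x₀ x (Φ x))
        = fun x => ((Ξc.symm : (Fin (Module.finrank ℂ F) → F₂) →L[ℂ] (F →L[ℂ] F₂)).restrictScalars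
            ℝ) (Ξc (ContinuousLinearMap.inCoordinates F V F₂ W x₀ x x₀ x (Φ x))) := by
      funext x
      show _ = Ξc.symm (Ξc _)
      rw [ContinuousLinearEquiv.symm_apply_apply]
    rw [hrw]
    exact (((Ξc.symm : (Fin (Module.finrank ℂ F) → F₂) →L[ℂ]
      (F →L[ℂ] F₂)).restrictScalars ℝ).contDiff).comp_contMDiffAt hG
  refine ⟨⟨fun x => Φ x, hsmooth⟩, ?_⟩
  intro x
  constructor
  · intro v w hvw
    have h : Φ x v = Φ x w := hvw
    rw [hΦapp, hΦapp] at h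
    have h1 := congrArg (fiberMap e.symm.toLinearMap x (f x) (hfsW x) (hfx x)) h
    rwa [fiberMap_left_inv e x (f x) (f x) (hfsV x) (hfsW x) (hfx x) (hfx x) v,
      fiberMap_left_inv e x (f x) (f x) (hfsV x) (hfsW x) (hfx x) (hfx x) w] at h1
  · intro w
    refine ⟨fiberMap e.symm.toLinearMap x (f x) (hfsW x) (hfx x) w, ?_⟩
    show Φ x _ = w
    rw [hΦapp]
    have h1 := fiberMap_left_inv e.symm x (f x) (f x) (hfsW x) (hfsV x) (hfx x) (hfx x) w
    simpa using h1

end
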